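/- (Lenart's Pieri formula, combinatorial form.) Let θ be a nonempty horizontal strip and let r(θ) denote its number of nonempty rows. Then for every integer p, A(θ,p) = (-1)^{|θ|-p} · binom(r(θ)-1, |θ|-p), where binom(a,b) = 0 unless 0 ≤ b ≤ a. -/

import Mathlib

/-- The south-east corners of a finite set of boxes: boxes `(i,j)` such that
neither `(i+1,j)` nor `(i,j+1)` belongs to the set. -/
def seCorners (θ : Finset (ℤ × ℤ)) : Finset (ℤ × ℤ) :=
  θ.filter fun b => (b.1 + 1, b.2) ∉ θ ∧ (b.1, b.2 + 1) ∉ θ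

/-- `c(θ)`: the number of nonempty columns of `θ`. -/
def colCount (θ : Finset (ℤ × ℤ)) : ℕ := (θ.image Prod.snd).card

/-- `χ(φ,p) = 1` if `p ≤ c(φ)` and `0` otherwise. -/
def chi (φ : Finset (ℤ × ℤ)) (p : ℤ) : ℤ := if p ≤ (colCount φ : ℤ) then 1 else 0

/-- `A(θ,p) = Σ_S (-1)^{|S|} χ(θ∖S, p)`, the sum over subsets `S` of the set of
south-east corners of `θ`. -/
def Acoef (θ : Finset (ℤ × ℤ)) (p : ℤ) : ℤ :=
  ∑ S ∈ (seCorners θ).powerset, (-1) ^ S.card * chi (θ \ S) p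

/-- A partition in the `m × k` rectangle: a weakly decreasing sequence
`λ_1 ≥ … ≥ λ_m ≥ 0` of integers with `λ_1 ≤ k` (indexed by `1,…,m`). -/
def IsRectPartition (m k : ℕ) (lam : ℤ → ℤ) : Prop :=
  (∀ i j : ℤ, 1 ≤ i → i ≤ j → j ≤ (m : ℤ) → lam j ≤ lam i) ∧
  (∀ i : ℤ, 1 ≤ i → i ≤ (m : ℤ) → 0 ≤ lam i) ∧ lam 1 ≤ (k : ℤ)

/-- The Young diagram `{(i,j) : 1 ≤ i ≤ m, 1 ≤ j ≤ λ_i}` of a partition in the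
`m × k` rectangle. -/
noncomputable def youngD (m k : ℕ) (lam : ℤ → ℤ) : Finset (ℤ × ℤ) :=
  (Finset.Icc (1 : ℤ) (m : ℤ) ×ˢ Finset.Icc (1 : ℤ) (k : ℤ)).filter fun b => b.2 ≤ lam b.1

/-- `θ` is a skew diagram in the `m × k` rectangle: `θ = ν/λ` for partitions
`λ ⊆ ν` in the `m × k` rectangle. -/
def IsSkewDiagram (m k : ℕ) (θ : Finset (ℤ × ℤ)) : Prop :=
  ∃ lam nu : ℤ → ℤ, IsRectPartition m k lam ∧ IsRectPartition m k nu ∧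
    (∀ i : ℤ, 1 ≤ i → i ≤ (m : ℤ) → lam i ≤ nu i) ∧
    θ = youngD m k nu \ youngD m k lam

/-- A horizontal strip contains at most one box in each column. -/
def IsHorizontalStrip (θ : Finset (ℤ × ℤ)) : Prop :=
  ∀ b ∈ θ, ∀ b' ∈ θ, b.2 = b'.2 → b.1 = b'.1

/-- `r(θ)`: the number of nonempty rows of `θ`. -/
def rowCount (θ : Finset (ℤ × ℤ)) : ℕ := (θ.image Prod.fst).card

/-- The binomial coefficient `binom(a,b)` for an integer `b`, which is `0`
unless `0 ≤ b ≤ a`. -/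
def intChoose (a : ℕ) (b : ℤ) : ℤ := if 0 ≤ b then (a.choose b.toNat : ℤ) else 0

lemma alt_partial (r t : ℕ) (hr : 1 ≤ r) :
    ∑ j ∈ Finset.range (t+1), (-1:ℤ)^j * (r.choose j) = (-1:ℤ)^t * ((r-1).choose t) := by
  induction t with
  | zero => simp
  | succ t ih =>
    rw [Finset.sum_range_succ, ih]
    obtain ⟨r', rfl⟩ : ∃ r', r = r' + 1 := ⟨r-1, by omega⟩
    simp only [Nat.add_sub_cancel]
    rw [Nat.choose_succ_succ' r' t]
    push_cast
    ring

/-- Lenart's Pieri formula, combinatorial form: for a nonempty horizontal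
strip `θ` and every integer `p`,
`A(θ,p) = (-1)^{|θ|-p} · binom(r(θ)-1, |θ|-p)`. -/
theorem Acoef_eq_signed_binomial (m k : ℕ) (hm : 0 < m) (hk : 0 < k)
    (θ : Finset (ℤ × ℤ)) (hθ : IsSkewDiagram m k θ) (hhs : IsHorizontalStrip θ)
    (hne : θ.Nonempty) (p : ℤ) :
    (Acoef θ p : ℚ) =
      (-1 : ℚ) ^ ((θ.card : ℤ) - p) *
        (intChoose (rowCount θ - 1) ((θ.card : ℤ) - p) : ℚ) := by
  classical
  obtain ⟨lam, nu, hlam, hnu, hle, hθeq⟩ := hθ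
  have hmem : ∀ i j : ℤ, (i,j) ∈ θ ↔
      (1 ≤ i ∧ i ≤ (m:ℤ) ∧ 1 ≤ j ∧ j ≤ (k:ℤ) ∧ lam i < j ∧ j ≤ nu i) := by
    intro i j
    rw [hθeq]
    simp only [Finset.mem_sdiff, youngD, Finset.mem_filter, Finset.mem_product, Finset.mem_Icc]
    omega
  have hint : ∀ i j j' l : ℤ, (i,j) ∈ θ → (i,j') ∈ θ → j ≤ l → l ≤ j' → (i,l) ∈ θ := by
    intro i j j' l h1 h2 hl1 hl2
    rw [hmem] at h1 h2 ⊢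
    omega
  have hCsub : seCorners θ ⊆ θ := Finset.filter_subset _ _
  have hCcard : (seCorners θ).card = rowCount θ := by
    have himg : (seCorners θ).image Prod.fst = θ.image Prod.fst := by
      apply Finset.Subset.antisymm (Finset.image_subset_image hCsub)
      intro i hi
      simp only [Finset.mem_image] at hi ⊢
      obtain ⟨b, hb, rfl⟩ := hi
      obtain ⟨c, hc, hcmax⟩ := Finset.exists_max_image (θ.filter fun x => x.1 = b.1)
        Prod.snd ⟨b, Finset.mem_filter.2 ⟨hb, rfl⟩⟩
      obtain ⟨hcθ, hcb⟩ := Finset.mem_filter.1 hc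
      refine ⟨c, Finset.mem_filter.2 ⟨hcθ, ?_, ?_⟩, hcb⟩
      · intro habs
        have h1 : c.1 + 1 = c.1 := hhs _ habs c hcθ rfl
        omega
      · intro habs
        have h2 := hcmax _ (Finset.mem_filter.2 ⟨habs, hcb⟩)
        simp only [] at h2
        omega
    have hinj : Set.InjOn Prod.fst ((seCorners θ : Finset (ℤ×ℤ)) : Set (ℤ × ℤ)) := by
      intro a ha b hb hf
      simp only [Finset.mem_coe, seCorners, Finset.mem_filter] at ha hb
      obtain ⟨haθ, -, har⟩ := ha
      obtain ⟨hbθ, -, hbr⟩ := hb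
      have ha' : (a.1, a.2) ∈ θ := by simpa using haθ
      have hb' : (a.1, b.2) ∈ θ := by rw [hf]; simpa using hbθ
      rcases lt_trichotomy a.2 b.2 with h|h|h
      · exact absurd (hint a.1 a.2 b.2 (a.2+1) ha' hb' (by omega) (by omega)) har
      · exact Prod.ext hf h
      · refine absurd (hint a.1 b.2 a.2 (b.2+1) hb' ha' (by omega) (by omega)) ?_
        rw [hf]
        exact hbr
    rw [← Finset.card_image_of_injOn hinj, himg, rowCount]
  have hr1 : 1 ≤ rowCount θ := Finset.card_pos.2 (hne.image _)
  have hchi : ∀ S ∈ (seCorners θ).powerset,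
      chi (θ \ S) p = (if p ≤ (θ.card : ℤ) - S.card then 1 else 0) := by
    intro S hS
    have hSθ : S ⊆ θ := (Finset.mem_powerset.1 hS).trans hCsub
    have hhs' : IsHorizontalStrip (θ \ S) := fun b hb b' hb' h =>
      hhs b (Finset.mem_sdiff.1 hb).1 b' (Finset.mem_sdiff.1 hb').1 h
    have hinj2 : Set.InjOn Prod.snd ((θ \ S : Finset (ℤ×ℤ)) : Set (ℤ×ℤ)) := fun b hb b' hb' h =>
      Prod.ext (hhs' b (Finset.mem_coe.1 hb) b' (Finset.mem_coe.1 hb') h) h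
    have hcc : colCount (θ \ S) = θ.card - S.card := by
      rw [colCount, Finset.card_image_of_injOn hinj2, Finset.card_sdiff_of_subset hSθ]
    rw [chi, hcc, Nat.cast_sub (Finset.card_le_card hSθ)]
  have hA2 : Acoef θ p = ∑ j ∈ Finset.range (rowCount θ + 1),
      ((rowCount θ).choose j : ℤ) * ((-1:ℤ)^j * (if p ≤ (θ.card:ℤ) - j then 1 else 0)) := by
    rw [Acoef, Finset.sum_congr rfl fun S hS => by rw [hchi S hS], Finset.sum_powerset, hCcard]
    refine Finset.sum_congr rfl fun j hj => ?_
    rw [Finset.sum_congr rfl (fun S hS => by rw [(Finset.mem_powersetCard.1 hS).2]),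
      Finset.sum_const, Finset.card_powersetCard, hCcard, nsmul_eq_mul]
  by_cases hp : p ≤ (θ.card : ℤ)
  · set t : ℕ := ((θ.card:ℤ) - p).toNat with ht
    have htq : ((θ.card:ℤ) - p) = (t:ℤ) := by omega
    have hA3 : Acoef θ p = ∑ j ∈ Finset.range (rowCount θ + 1),
        (if j ≤ t then (-1:ℤ)^j * ((rowCount θ).choose j) else 0) := by
      rw [hA2]
      refine Finset.sum_congr rfl fun j hj => ?_
      by_cases h : j ≤ t
      · rw [if_pos h, if_pos (by omega), mul_one]; ring
      · rw [if_neg h, if_neg (by omega), mul_zero, mul_zero]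
    set r := rowCount θ with hrdef
    set M := max r t with hM
    have hext : ∑ j ∈ Finset.range (r + 1), (if j ≤ t then (-1:ℤ)^j * (r.choose j) else 0)
        = ∑ j ∈ Finset.range (M + 1), (if j ≤ t then (-1:ℤ)^j * (r.choose j) else 0) := by
      apply Finset.sum_subset (Finset.range_subset_range.2 (by omega))
      intro j hj hj'
      simp only [Finset.mem_range] at hj hj'
      have hrj : r < j := by omega
      by_cases h : j ≤ t
      · rw [if_pos h, Nat.choose_eq_zero_of_lt hrj]; simp
      · rw [if_neg h]
    have hfilter : ∑ j ∈ Finset.range (M + 1), (if j ≤ t then (-1:ℤ)^j * (r.choose j) else 0)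
        = ∑ j ∈ Finset.range (t + 1), (-1:ℤ)^j * (r.choose j) := by
      rw [← Finset.sum_filter]
      congr 1
      ext j
      simp only [Finset.mem_filter, Finset.mem_range]
      omega
    rw [hA3, hext, hfilter, alt_partial r t hr1, htq, intChoose, if_pos (by positivity),
      Int.toNat_natCast]
    push_cast
    rw [zpow_natCast]
  · have hA3 : Acoef θ p = 0 := by
      rw [hA2]
      apply Finset.sum_eq_zero
      intro j hj
      rw [if_neg (by omega), mul_zero, mul_zero]
    rw [hA3, intChoose, if_neg (by omega)]
    simp
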